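/- Let f(x) = wᵀx + b with w ≠ 0 and f(x) ≠ 0, let v be a random vector with E[wᵀv] = 0, Var(wᵀv) = σ² > 0, and E[(wᵀv)⁴] = m₄ < ∞, and suppose v and -v have the same distribution. If |α| > ‖w‖_{p'}·dist_p(x,H) / √(σ² - √(2ε·m₄)) for some ε with 2ε·m₄ < σ⁴, then P(f(x)·f(x+αv) ≤ 0) > ε. -/

import Mathlib

set_option maxHeartbeats 1000000


open MeasureTheory ProbabilityTheory Matrix Finset

/-- Paley–Zygmund lower bound on misclassification: for the linear classifier
`f(z) = wᵀz + b` and a symmetric random vector `v` with `E[wᵀv] = 0`, `Var(wᵀv) = σ² > 0`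
and `E[(wᵀv)⁴] = m₄`, if `2ε·m₄ < σ⁴` and
`|α| > ‖w‖_{p'}·dist_p(x,H)/√(σ² - √(2ε·m₄))` (with `dist_p(x,H) = |f(x)|/‖w‖_{p'}`),
then `P(f(x)·f(x+αv) ≤ 0) > ε`. -/
theorem symmetric_noise_paley_zygmund_bound {Ω : Type*} [MeasureSpace Ω]
    [IsProbabilityMeasure (ℙ : Measure Ω)] (d : ℕ)
    (w : Fin d → ℝ) (hw : w ≠ 0) (b : ℝ) (x : Fin d → ℝ) (hfx : w ⬝ᵥ x + b ≠ 0)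
    (v : Ω → Fin d → ℝ) (hv : Measurable v)
    (hsymm : Measure.map v ℙ = Measure.map (fun ω => -v ω) ℙ)
    (σ m₄ : ℝ) (hσ : 0 < σ)
    (hint1 : Integrable (fun ω => w ⬝ᵥ v ω)) (hmean : (∫ ω, w ⬝ᵥ v ω) = 0)
    (hint2 : Integrable (fun ω => (w ⬝ᵥ v ω) ^ 2))
    (hvar : (∫ ω, (w ⬝ᵥ v ω) ^ 2) = σ ^ 2)
    (hint4 : Integrable (fun ω => (w ⬝ᵥ v ω) ^ 4))
    (hm4 : (∫ ω, (w ⬝ᵥ v ω) ^ 4) = m₄)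
    (ε : ℝ) (hε : 0 ≤ ε) (hεm : 2 * ε * m₄ < σ ^ 4)
    (p' : ℝ) (hp' : 1 ≤ p') (α : ℝ)
    (hα : |α| > ((∑ i, |w i| ^ p') ^ (1 / p')
          * (|w ⬝ᵥ x + b| / (∑ i, |w i| ^ p') ^ (1 / p')))
        / Real.sqrt (σ ^ 2 - Real.sqrt (2 * ε * m₄))) :
    ENNReal.ofReal ε < ℙ {ω | (w ⬝ᵥ x + b) * (w ⬝ᵥ (x + α • v ω) + b) ≤ 0} := by
  classical
  set c : ℝ := w ⬝ᵥ x + b with hc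
  set Y : Ω → ℝ := fun ω => w ⬝ᵥ v ω with hYdef
  have hYmeas : Measurable Y := by
    simp only [hYdef, dotProduct]
    exact Finset.measurable_sum _ fun i _ =>
      measurable_const.mul ((measurable_pi_apply i).comp hv)
  -- m₄ ≥ 0
  have hm4nn : 0 ≤ m₄ := by
    rw [← hm4]; exact integral_nonneg fun ω => by positivity
  -- simplify the norm factor in hα
  have hwsum : 0 < ∑ i, |w i| ^ p' := by
    obtain ⟨i, hi⟩ : ∃ i, w i ≠ 0 := by
      by_contra h; push_neg at h; exact hw (funext h)
    exact Finset.sum_pos' (fun j _ => Real.rpow_nonneg (abs_nonneg _) _)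
      ⟨i, Finset.mem_univ i, Real.rpow_pos_of_pos (abs_pos.mpr hi) _⟩
  have hnum : (∑ i, |w i| ^ p') ^ (1 / p') * (|c| / (∑ i, |w i| ^ p') ^ (1 / p')) = |c| := by
    rw [mul_comm, div_mul_cancel₀]
    exact ne_of_gt (Real.rpow_pos_of_pos hwsum _)
  rw [hnum] at hα
  set s : ℝ := Real.sqrt (2 * ε * m₄) with hsdef
  have hsnn : 0 ≤ s := Real.sqrt_nonneg _
  have hs2 : s ^ 2 = 2 * ε * m₄ := Real.sq_sqrt (by positivity)
  have hslt : s < σ ^ 2 := by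
    by_contra h
    push_neg at h
    have : σ ^ 2 * σ ^ 2 ≤ s * s := mul_le_mul h h (by positivity) hsnn
    nlinarith
  have hden : 0 < Real.sqrt (σ ^ 2 - s) := Real.sqrt_pos.mpr (by linarith)
  have hcpos : 0 < |c| := abs_pos.mpr hfx
  have hαpos : 0 < |α| := lt_trans (by positivity) hα
  have hα2 : 0 < α ^ 2 := by
    have := sq_abs α; nlinarith
  have hclt : |c| < |α| * Real.sqrt (σ ^ 2 - s) := by
    rw [gt_iff_lt, div_lt_iff₀ hden] at hα; linarith
  have hsq : c ^ 2 < α ^ 2 * (σ ^ 2 - s) := by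
    have h1 : |c| * |c| < (|α| * Real.sqrt (σ ^ 2 - s)) * (|α| * Real.sqrt (σ ^ 2 - s)) :=
      mul_lt_mul' (le_of_lt hclt) hclt (abs_nonneg c) (by positivity)
    have h2 : Real.sqrt (σ ^ 2 - s) * Real.sqrt (σ ^ 2 - s) = σ ^ 2 - s :=
      Real.mul_self_sqrt (by linarith)
    have h3 := sq_abs c
    have h4 := sq_abs α
    nlinarith
  set θ : ℝ := c ^ 2 / α ^ 2 with hθdef
  have hθnn : 0 ≤ θ := by positivity
  have hθlt : s < σ ^ 2 - θ := by
    have hθ' : θ < σ ^ 2 - s := by rw [hθdef, div_lt_iff₀ hα2]; nlinarith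
    linarith
  -- The Paley–Zygmund event
  set A : Set Ω := {ω | θ ≤ (Y ω) ^ 2} with hAdef
  have hA : MeasurableSet A := measurableSet_le measurable_const (hYmeas.pow_const 2)
  set P : ℝ := (ℙ A).toReal with hPdef
  have hPnn : 0 ≤ P := ENNReal.toReal_nonneg
  -- Hölder / Cauchy–Schwarz step
  have hZint : Integrable (fun ω => (Y ω) ^ 2) := hint2
  have hCS : ∫ ω in A, (Y ω) ^ 2 ≤ Real.sqrt m₄ * Real.sqrt P := by
    have hconj : Real.HolderConjugate 2 2 := Real.holderConjugate_iff.mpr ⟨one_lt_two, by norm_num⟩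
    have hmemZ : MemLp (fun ω => (Y ω) ^ 2) (ENNReal.ofReal 2) ℙ := by
      have : (ENNReal.ofReal 2) = (2 : ENNReal) := by norm_num
      rw [this, memLp_two_iff_integrable_sq (hYmeas.pow_const 2).aestronglyMeasurable]
      have : (fun ω => ((Y ω) ^ 2) ^ 2) = fun ω => (Y ω) ^ 4 := by
        funext ω; ring
      rw [this]; exact hint4
    have hmemI : MemLp (A.indicator fun _ => (1 : ℝ)) (ENNReal.ofReal 2) ℙ :=
      memLp_indicator_const _ hA 1 (Or.inr (measure_ne_top _ _))
    have h := integral_mul_le_Lp_mul_Lq_of_nonneg hconj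
      (f := fun ω => (Y ω) ^ 2) (g := A.indicator fun _ => (1 : ℝ))
      (Filter.Eventually.of_forall fun ω => by positivity)
      (Filter.Eventually.of_forall fun ω => Set.indicator_nonneg (fun _ _ => zero_le_one) ω)
      hmemZ hmemI
    have e1 : ∫ ω, (Y ω) ^ 2 * (A.indicator fun _ => (1 : ℝ)) ω = ∫ ω in A, (Y ω) ^ 2 := by
      rw [← integral_indicator hA]
      congr 1; funext ω
      by_cases hω : ω ∈ A <;> simp [hω]
    have e2 : ∫ ω, ((Y ω) ^ 2) ^ (2 : ℝ) = m₄ := by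
      rw [← hm4]
      congr 1; funext ω
      rw [show ((2:ℝ) = ((2:ℕ):ℝ)) by norm_num, Real.rpow_natCast]
      ring
    have e3 : ∫ ω, ((A.indicator fun _ => (1 : ℝ)) ω) ^ (2 : ℝ) = P := by
      have : (fun ω => ((A.indicator fun _ => (1 : ℝ)) ω) ^ (2 : ℝ))
          = A.indicator fun _ => (1 : ℝ) := by
        funext ω; by_cases hω : ω ∈ A <;> simp [hω]
      rw [this, integral_indicator hA, setIntegral_const, smul_eq_mul, mul_one, measureReal_def, hPdef]
    rw [e1, e2, e3] at h
    calc ∫ ω in A, (Y ω) ^ 2 ≤ m₄ ^ (1 / (2:ℝ)) * P ^ (1 / (2:ℝ)) := h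
      _ = Real.sqrt m₄ * Real.sqrt P := by
          rw [Real.sqrt_eq_rpow, Real.sqrt_eq_rpow]
  -- bound on the complement
  have hcompl : ∫ ω in Aᶜ, (Y ω) ^ 2 ≤ θ := by
    have h1 : ∫ ω in Aᶜ, (Y ω) ^ 2 ≤ ∫ ω in Aᶜ, θ := by
      apply setIntegral_mono_on hZint.integrableOn ((integrableOn_const_iff (C := θ)).mpr (Or.inr ?_)) hA.compl
      · intro ω hω
        simp only [hAdef, Set.mem_compl_iff, Set.mem_setOf_eq, not_le] at hω
        exact le_of_lt hω
      · exact measure_lt_top _ _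
    have h2 : ∫ ω in Aᶜ, θ = (ℙ Aᶜ).toReal * θ := by
      rw [setIntegral_const, smul_eq_mul, measureReal_def]
    have h3 : (ℙ Aᶜ).toReal ≤ 1 := by
      have := prob_le_one (μ := ℙ) (s := Aᶜ)
      simpa using ENNReal.toReal_mono (by norm_num) this
    calc ∫ ω in Aᶜ, (Y ω) ^ 2 ≤ (ℙ Aᶜ).toReal * θ := h2 ▸ h1
      _ ≤ 1 * θ := mul_le_mul_of_nonneg_right h3 hθnn
      _ = θ := one_mul θ
  -- conclude Paley–Zygmund: σ² - θ ≤ √m₄ √P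
  have hsplit : σ ^ 2 = (∫ ω in A, (Y ω) ^ 2) + ∫ ω in Aᶜ, (Y ω) ^ 2 := by
    rw [← hvar, ← integral_add_compl hA hZint]
  have hPZ : σ ^ 2 - θ ≤ Real.sqrt m₄ * Real.sqrt P := by linarith
  have h1 : s < Real.sqrt m₄ * Real.sqrt P := lt_of_lt_of_le hθlt hPZ
  have hqpos : 0 < Real.sqrt m₄ * Real.sqrt P := lt_of_le_of_lt hsnn h1
  have h2 : (Real.sqrt m₄ * Real.sqrt P) * (Real.sqrt m₄ * Real.sqrt P) = m₄ * P := by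
    rw [show (Real.sqrt m₄ * Real.sqrt P) * (Real.sqrt m₄ * Real.sqrt P)
      = (Real.sqrt m₄ * Real.sqrt m₄) * (Real.sqrt P * Real.sqrt P) by ring,
      Real.mul_self_sqrt hm4nn, Real.mul_self_sqrt hPnn]
  have hm4P : 2 * ε * m₄ < m₄ * P := by
    have h3 : s * s < (Real.sqrt m₄ * Real.sqrt P) * (Real.sqrt m₄ * Real.sqrt P) :=
      mul_lt_mul' h1.le h1 hsnn hqpos
    calc 2 * ε * m₄ = s * s := by rw [← hs2]; ring
      _ < (Real.sqrt m₄ * Real.sqrt P) * (Real.sqrt m₄ * Real.sqrt P) := h3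
      _ = m₄ * P := h2
  have hm4pos : 0 < m₄ := by
    have hmp : 0 < m₄ * P := h2 ▸ mul_pos hqpos hqpos
    by_contra h
    push_neg at h
    have : m₄ * P ≤ 0 := mul_nonpos_of_nonpos_of_nonneg h hPnn
    linarith
  have hP2ε : 2 * ε < P := by
    have h4 : m₄ * (2 * ε) < m₄ * P := by linarith
    exact lt_of_mul_lt_mul_left h4 hm4nn
  -- symmetry step
  set S : Set (Fin d → ℝ) := {y | c * (c + α * (w ⬝ᵥ y)) ≤ 0} with hSdef
  have hdotmeas : Measurable fun y : Fin d → ℝ => w ⬝ᵥ y := by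
    simp only [dotProduct]
    exact Finset.measurable_sum _ fun i _ => measurable_const.mul (measurable_pi_apply i)
  have hS : MeasurableSet S :=
    measurableSet_le (measurable_const.mul (measurable_const.add
      (measurable_const.mul hdotmeas))) measurable_const
  have hEeq : {ω | (w ⬝ᵥ x + b) * (w ⬝ᵥ (x + α • v ω) + b) ≤ 0} = v ⁻¹' S := by
    ext ω
    simp only [Set.mem_setOf_eq, Set.mem_preimage, hSdef]
    have : (w ⬝ᵥ x + b) * (w ⬝ᵥ (x + α • v ω) + b) = c * (c + α * (w ⬝ᵥ v ω)) := by
      rw [dotProduct_add, dotProduct_smul, smul_eq_mul, hc]; ring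
    rw [this]
  have hmapeq : ℙ (v ⁻¹' S) = ℙ ((fun ω => -v ω) ⁻¹' S) := by
    rw [← Measure.map_apply hv hS, hsymm, Measure.map_apply (f := fun ω => -v ω) hv.neg hS]
  have hsub : A ⊆ (v ⁻¹' S) ∪ ((fun ω => -v ω) ⁻¹' S) := by
    intro ω hω
    simp only [hAdef, Set.mem_setOf_eq] at hω
    have hc2 : c ^ 2 ≤ α ^ 2 * (Y ω) ^ 2 := by
      rw [hθdef, div_le_iff₀ hα2] at hω; linarith
    by_contra h
    rw [Set.mem_union, not_or] at h
    obtain ⟨h1, h2⟩ := h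
    have hY1 : ¬ (c * (c + α * Y ω) ≤ 0) := h1
    have hY2 : ¬ (c * (c + α * (w ⬝ᵥ (-v ω))) ≤ 0) := h2
    have hneg : w ⬝ᵥ (-v ω) = -(Y ω) := by simp [hYdef, neg_dotProduct, dotProduct_neg]
    rw [hneg] at hY2
    push_neg at hY1 hY2
    nlinarith
  have hcount : P ≤ 2 * (ℙ (v ⁻¹' S)).toReal := by
    have h1 : ℙ A ≤ ℙ (v ⁻¹' S) + ℙ ((fun ω => -v ω) ⁻¹' S) :=
      le_trans (measure_mono hsub) (measure_union_le _ _)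
    have h2 : (ℙ A).toReal ≤ (ℙ (v ⁻¹' S) + ℙ ((fun ω => -v ω) ⁻¹' S)).toReal :=
      ENNReal.toReal_mono (by finiteness) h1
    rw [ENNReal.toReal_add (measure_ne_top _ _) (measure_ne_top _ _), ← hmapeq] at h2
    rw [hPdef]; linarith
  have hfinal : ε < (ℙ (v ⁻¹' S)).toReal := by linarith
  rw [hEeq]
  rw [← ENNReal.ofReal_toReal (measure_ne_top ℙ (v ⁻¹' S))]
  exact (ENNReal.ofReal_lt_ofReal_iff (lt_of_le_of_lt hε hfinal)).mpr hfinal
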